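/- Third conditional Ingleton inequality [3cI]: let ξ_X, ξ_Y, ξ_Z, ξ_U be discrete random variables with nonempty finite ranges on a common probability space, and let h be the entropy function assigning to each subset S of {X, Y, Z, U} the Shannon entropy of the joint distribution of (ξ_i)_{i∈S}. If ξ_X ⊥ ξ_Z | ξ_U and ξ_X ⊥ ξ_U | ξ_Z, then □h(X,Y) ≥ 0. -/

import Mathlib

open MeasureTheory

/-- The probability that the discrete random variable `f` takes the value `x`. -/
noncomputable def probOf {Ω S : Type*} [MeasurableSpace Ω] (μ : Measure Ω)
    (f : Ω → S) (x : S) : ℝ :=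
  (μ {ω | f ω = x}).toReal

/-- The Shannon entropy `−Σ_x p(x)·ln p(x)` of the distribution of a discrete
random variable `f` with finite range `S`. -/
noncomputable def entropyOf {Ω S : Type*} [MeasurableSpace Ω] [Fintype S]
    (μ : Measure Ω) (f : Ω → S) : ℝ :=
  ∑ x : S, Real.negMulLog (probOf μ f x)

/-- Conditional independence of discrete random variables:
`P(f = a, g = b, k = c) · P(k = c) = P(f = a, k = c) · P(g = b, k = c)` for all values. -/
def CondIndepRV {Ω A B C : Type*} [MeasurableSpace Ω] (μ : Measure Ω)
    (f : Ω → A) (g : Ω → B) (k : Ω → C) : Prop :=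
  ∀ (a : A) (b : B) (c : C),
    μ {ω | f ω = a ∧ g ω = b ∧ k ω = c} * μ {ω | k ω = c} =
    μ {ω | f ω = a ∧ k ω = c} * μ {ω | g ω = b ∧ k ω = c}

/-- Unconditional independence: the case of a constant conditioning variable. -/
def IndepRV {Ω A B : Type*} [MeasurableSpace Ω] (μ : Measure Ω)
    (f : Ω → A) (g : Ω → B) : Prop :=
  CondIndepRV μ f g (fun _ => ())

/-- The Ingleton expression □h(X,Y) for the entropy function `h` of the four
discrete random variables `ξX, ξY, ξZ, ξU` (entropies of joint sub-vectors). -/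
noncomputable def ingletonEnt {Ω SX SY SZ SU : Type*} [MeasurableSpace Ω]
    [Fintype SX] [Fintype SY] [Fintype SZ] [Fintype SU] (μ : Measure Ω)
    (ξX : Ω → SX) (ξY : Ω → SY) (ξZ : Ω → SZ) (ξU : Ω → SU) : ℝ :=
  - entropyOf μ (fun ω => (ξX ω, ξY ω)) + entropyOf μ (fun ω => (ξX ω, ξZ ω))
  + entropyOf μ (fun ω => (ξX ω, ξU ω)) + entropyOf μ (fun ω => (ξY ω, ξZ ω))
  + entropyOf μ (fun ω => (ξY ω, ξU ω)) + entropyOf μ (fun ω => (ξZ ω, ξU ω))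
  - entropyOf μ ξZ - entropyOf μ ξU
  - entropyOf μ (fun ω => (ξX ω, ξZ ω, ξU ω)) - entropyOf μ (fun ω => (ξY ω, ξZ ω, ξU ω))

set_option linter.unusedSectionVars false

open Real Finset

section Aux0

variable {Ω : Type*} [MeasurableSpace Ω] {μ : Measure Ω}
variable {A B C : Type*}

lemma probOf_nonneg' (φ : Ω → A) (a : A) : 0 ≤ probOf μ φ a := ENNReal.toReal_nonneg

end Aux0

section Aux

variable {Ω : Type*} [MeasurableSpace Ω] {μ : Measure Ω} [IsProbabilityMeasure μ]
variable {A B C : Type*}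

lemma probOf_mono' {φ : Ω → A} {χ : Ω → B} {a : A} {b : B}
    (h : ∀ ω, φ ω = a → χ ω = b) : probOf μ φ a ≤ probOf μ χ b :=
  ENNReal.toReal_mono (measure_ne_top _ _) (measure_mono h)

lemma probOf_empty' {φ : Ω → A} {a : A} (h : ∀ ω, φ ω ≠ a) : probOf μ φ a = 0 := by
  have : {ω | φ ω = a} = (∅ : Set Ω) := by ext ω; simp [h ω]
  simp [probOf, this]

lemma probOf_eq_of_iff {φ : Ω → A} {χ : Ω → B} {a : A} {b : B}
    (h : ∀ ω, φ ω = a ↔ χ ω = b) : probOf μ φ a = probOf μ χ b := by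
  unfold probOf; congr 1; exact congrArg μ (Set.ext fun ω => h ω)

lemma probOf_congr_ae {φ χ : Ω → A} (h : μ {ω | φ ω ≠ χ ω} = 0) (a : A) :
    probOf μ φ a = probOf μ χ a := by
  have key : ∀ (φ' χ' : Ω → A), μ {ω | φ' ω ≠ χ' ω} = 0 →
      μ {ω | φ' ω = a} ≤ μ {ω | χ' ω = a} := by
    intro φ' χ' h0
    calc μ {ω | φ' ω = a} ≤ μ ({ω | χ' ω = a} ∪ {ω | φ' ω ≠ χ' ω}) := by
          apply measure_mono; intro ω hω
          by_cases hc : χ' ω = a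
          · exact Or.inl hc
          · exact Or.inr (fun he => hc (he ▸ hω))
      _ ≤ μ {ω | χ' ω = a} + μ {ω | φ' ω ≠ χ' ω} := measure_union_le _ _
      _ = μ {ω | χ' ω = a} := by rw [h0, add_zero]
  have h' : μ {ω | χ ω ≠ φ ω} = 0 := by
    have : {ω | χ ω ≠ φ ω} = {ω | φ ω ≠ χ ω} := by ext ω; exact ne_comm
    rw [this]; exact h
  unfold probOf
  exact congrArg ENNReal.toReal (le_antisymm (key φ χ h) (key χ φ h'))

lemma probOf_comp [Fintype A] [MeasurableSpace A] [MeasurableSingletonClass A] [DecidableEq B]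
    {ψ : Ω → A} (hψ : Measurable ψ) (pj : A → B) (b : B) :
    probOf μ (fun ω => pj (ψ ω)) b = ∑ a : A, if pj a = b then probOf μ ψ a else 0 := by
  have hms : ∀ y ∈ (univ.filter fun a => pj a = b), MeasurableSet (ψ ⁻¹' {y}) :=
    fun y _ => hψ (measurableSet_singleton y)
  have hsum := sum_measure_preimage_singleton (μ := μ) (univ.filter fun a => pj a = b) hms
  have hset : ψ ⁻¹' ↑(univ.filter fun a => pj a = b) = {ω | pj (ψ ω) = b} := by
    ext ω; simp
  calc probOf μ (fun ω => pj (ψ ω)) b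
      = (∑ a ∈ univ.filter (fun a => pj a = b), μ (ψ ⁻¹' {a})).toReal := by
        rw [hsum, hset]; rfl
    _ = ∑ a ∈ univ.filter (fun a => pj a = b), probOf μ ψ a := by
        rw [ENNReal.toReal_sum (fun a _ => measure_ne_top μ _)]
        exact Finset.sum_congr rfl fun a _ => rfl
    _ = ∑ a : A, if pj a = b then probOf μ ψ a else 0 := Finset.sum_filter _ _

lemma sum_probOf [Fintype A] [MeasurableSpace A] [MeasurableSingletonClass A]
    {ψ : Ω → A} (hψ : Measurable ψ) : ∑ a : A, probOf μ ψ a = 1 := by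
  have hms : ∀ y ∈ (univ : Finset A), MeasurableSet (ψ ⁻¹' {y}) :=
    fun y _ => hψ (measurableSet_singleton y)
  have hsum := sum_measure_preimage_singleton (μ := μ) (univ : Finset A) hms
  have : ψ ⁻¹' ↑(univ : Finset A) = Set.univ := by simp
  rw [this] at hsum
  calc ∑ a : A, probOf μ ψ a = (∑ a : A, μ (ψ ⁻¹' {a})).toReal := by
        rw [ENNReal.toReal_sum (fun a _ => measure_ne_top μ _)]
        exact Finset.sum_congr rfl fun a _ => rfl
    _ = 1 := by rw [hsum, measure_univ]; rfl

lemma entropyOf_comp_inj [Fintype A] [Fintype B] {e : A → B}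
    (he : Function.Injective e) (ψ : Ω → A) :
    entropyOf μ (fun ω => e (ψ ω)) = entropyOf μ ψ := by
  classical
  have h1 : ∀ a, probOf μ (fun ω => e (ψ ω)) (e a) = probOf μ ψ a := by
    intro a
    exact probOf_eq_of_iff (fun ω => by simp [he.eq_iff])
  have h2 : ∀ b, b ∉ Set.range e → probOf μ (fun ω => e (ψ ω)) b = 0 := by
    intro b hb
    exact probOf_empty' (fun ω h => hb ⟨ψ ω, h⟩)
  unfold entropyOf
  rw [← Finset.sum_subset (Finset.subset_univ (univ.image e))]
  · rw [Finset.sum_image (fun a _ a' _ h => he h)]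
    exact Finset.sum_congr rfl fun a _ => by rw [h1]
  · intro b _ hb
    rw [h2 b (by simpa using hb), Real.negMulLog_zero]

lemma entropyOf_congr_ae [Fintype A] {φ χ : Ω → A} (h : μ {ω | φ ω ≠ χ ω} = 0) :
    entropyOf μ φ = entropyOf μ χ :=
  Finset.sum_congr rfl fun a _ => by rw [probOf_congr_ae h]

lemma entropyOf_comp_le [Fintype A] [Fintype B] [MeasurableSpace A] [MeasurableSingletonClass A]
    {ψ : Ω → A} (hψ : Measurable ψ) (pj : A → B) :
    entropyOf μ (fun ω => pj (ψ ω)) ≤ entropyOf μ ψ := by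
  classical
  unfold entropyOf
  have key : ∀ b : B, negMulLog (probOf μ (fun ω => pj (ψ ω)) b) ≤
      ∑ a ∈ univ.filter (fun a => pj a = b), negMulLog (probOf μ ψ a) := by
    intro b
    rw [probOf_comp hψ pj b, ← Finset.sum_filter]
    set s := univ.filter (fun a => pj a = b) with hs
    set S := ∑ a ∈ s, probOf μ ψ a with hS
    have hSa : ∀ a ∈ s, probOf μ ψ a ≤ S :=
      fun a ha => Finset.single_le_sum (fun a' _ => probOf_nonneg' ψ a') ha
    have expand : negMulLog S = ∑ a ∈ s, (-(probOf μ ψ a) * Real.log S) := by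
      rw [negMulLog, hS]
      rw [← Finset.sum_neg_distrib, Finset.sum_mul]
    rw [expand]
    apply Finset.sum_le_sum
    intro a ha
    rcases eq_or_lt_of_le (probOf_nonneg' ψ a) with h0 | h0
    · rw [← h0]; simp [negMulLog]
    · rw [negMulLog, neg_mul, neg_mul, neg_le_neg_iff]
      exact mul_le_mul_of_nonneg_left (Real.log_le_log h0 (hSa a ha)) h0.le
  calc ∑ b : B, negMulLog (probOf μ (fun ω => pj (ψ ω)) b)
      ≤ ∑ b : B, ∑ a ∈ univ.filter (fun a => pj a = b), negMulLog (probOf μ ψ a) :=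
        Finset.sum_le_sum fun b _ => key b
    _ = ∑ a : A, negMulLog (probOf μ ψ a) := Finset.sum_fiberwise _ _ _

end Aux

section Core

variable {A B C : Type*} [Fintype A] [Fintype B] [Fintype C]

private lemma log_term_ge {P Aq Bq K : ℝ} (hP : 0 ≤ P) (hA : P ≤ Aq) (hB : P ≤ Bq)
    (hK : P ≤ K) (hA0 : 0 ≤ Aq) (hB0 : 0 ≤ Bq) (hK0 : 0 ≤ K) :
    P - Aq * Bq / K ≤ P * Real.log P + P * Real.log K - P * Real.log Aq - P * Real.log Bq := by
  rcases eq_or_lt_of_le hP with h0 | h0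
  · rw [← h0]
    have : 0 ≤ Aq * Bq / K := div_nonneg (mul_nonneg hA0 hB0) hK0
    simp only [zero_mul, add_zero, sub_zero, zero_sub, zero_add]
    linarith
  · have hA0' : 0 < Aq := lt_of_lt_of_le h0 hA
    have hB0' : 0 < Bq := lt_of_lt_of_le h0 hB
    have hK0' : 0 < K := lt_of_lt_of_le h0 hK
    have hlog : Real.log (Aq * Bq / (P * K)) ≤ Aq * Bq / (P * K) - 1 :=
      Real.log_le_sub_one_of_pos (by positivity)
    have hexp : Real.log (Aq * Bq / (P * K))
        = Real.log Aq + Real.log Bq - Real.log P - Real.log K := by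
      rw [Real.log_div (by positivity) (by positivity), Real.log_mul hA0'.ne' hB0'.ne',
        Real.log_mul h0.ne' hK0'.ne']
      ring
    have hmul := mul_le_mul_of_nonneg_left hlog h0.le
    rw [hexp] at hmul
    have hfrac : P * (Aq * Bq / (P * K) - 1) = Aq * Bq / K - P := by
      field_simp
    rw [hfrac] at hmul
    nlinarith [hmul]

private lemma Ksq_div_le (K : ℝ) (hK : 0 ≤ K) : K * K / K ≤ K := by
  rcases eq_or_lt_of_le hK with h | h
  · rw [← h]; simp
  · rw [mul_div_assoc, div_self h.ne']; simp

private lemma neg_sum_mul {ι : Type*} (s : Finset ι) (w : ι → ℝ) (L : ℝ) :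
    -(∑ i ∈ s, w i) * L = ∑ i ∈ s, (-(w i) * L) := by
  rw [← Finset.sum_neg_distrib, Finset.sum_mul]

private lemma negMulLog_sum_expand {ι : Type*} (s : Finset ι) (w : ι → ℝ) :
    Real.negMulLog (∑ i ∈ s, w i) = ∑ i ∈ s, (-(w i) * Real.log (∑ j ∈ s, w j)) := by
  rw [Real.negMulLog, neg_sum_mul]

private lemma sum_reorder_abc (F : A → B → C → ℝ) :
    ∑ x : A × B × C, F x.1 x.2.1 x.2.2 = ∑ a : A, ∑ b : B, ∑ c : C, F a b c := by
  rw [Fintype.sum_prod_type]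
  exact Finset.sum_congr rfl fun a _ => Fintype.sum_prod_type _

private lemma sum_rot1 (F : A → B → C → ℝ) :
    ∑ a : A, ∑ b : B, ∑ c : C, F a b c = ∑ b : B, ∑ c : C, ∑ a : A, F a b c := by
  rw [Finset.sum_comm]
  exact Finset.sum_congr rfl fun b _ => Finset.sum_comm

private lemma sum_rot2 (F : A → B → C → ℝ) :
    ∑ a : A, ∑ b : B, ∑ c : C, F a b c = ∑ c : C, ∑ a : A, ∑ b : B, F a b c := by
  refine (Finset.sum_congr rfl fun a _ => Finset.sum_comm).trans ?_
  exact Finset.sum_comm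

private lemma expandA (P : A → B → C → ℝ) :
    ∑ y : A × C, Real.negMulLog (∑ b : B, P y.1 b y.2)
      = ∑ x : A × B × C, (-(P x.1 x.2.1 x.2.2) * Real.log (∑ b : B, P x.1 b x.2.2)) := by
  rw [sum_reorder_abc (fun a b c => -(P a b c) * Real.log (∑ b' : B, P a b' c))]
  rw [Fintype.sum_prod_type]
  refine Finset.sum_congr rfl fun a _ => ?_
  rw [Finset.sum_comm]
  exact Finset.sum_congr rfl fun c _ => negMulLog_sum_expand Finset.univ _

private lemma expandB (P : A → B → C → ℝ) :
    ∑ y : B × C, Real.negMulLog (∑ a : A, P a y.1 y.2)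
      = ∑ x : A × B × C, (-(P x.1 x.2.1 x.2.2) * Real.log (∑ a : A, P a x.2.1 x.2.2)) := by
  rw [sum_reorder_abc (fun a b c => -(P a b c) * Real.log (∑ a' : A, P a' b c))]
  rw [sum_rot1 (fun a b c => -(P a b c) * Real.log (∑ a' : A, P a' b c))]
  rw [Fintype.sum_prod_type]
  refine Finset.sum_congr rfl fun b _ => ?_
  exact Finset.sum_congr rfl fun c _ => negMulLog_sum_expand Finset.univ _

private lemma expandK (P : A → B → C → ℝ) :
    ∑ c : C, Real.negMulLog (∑ a : A, ∑ b : B, P a b c)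
      = ∑ x : A × B × C, (-(P x.1 x.2.1 x.2.2) * Real.log (∑ a : A, ∑ b : B, P a b x.2.2)) := by
  rw [sum_reorder_abc (fun a b c => -(P a b c) * Real.log (∑ a' : A, ∑ b' : B, P a' b' c))]
  rw [sum_rot2 (fun a b c => -(P a b c) * Real.log (∑ a' : A, ∑ b' : B, P a' b' c))]
  refine Finset.sum_congr rfl fun c _ => ?_
  rw [negMulLog_sum_expand Finset.univ (fun a => ∑ b : B, P a b c)]
  exact Finset.sum_congr rfl fun a _ => neg_sum_mul _ _ _

lemma kl_core (P : A → B → C → ℝ) (hP : ∀ a b c, 0 ≤ P a b c)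
    (hsum : ∑ x : A × B × C, P x.1 x.2.1 x.2.2 = 1) :
    ∑ x : A × B × C, Real.negMulLog (P x.1 x.2.1 x.2.2)
      + ∑ c : C, Real.negMulLog (∑ a : A, ∑ b : B, P a b c)
    ≤ ∑ y : A × C, Real.negMulLog (∑ b : B, P y.1 b y.2)
      + ∑ y : B × C, Real.negMulLog (∑ a : A, P a y.1 y.2) := by
  classical
  have hAf0 : ∀ (a : A) (c : C), 0 ≤ ∑ b : B, P a b c :=
    fun a c => Finset.sum_nonneg fun b _ => hP a b c
  have hBf0 : ∀ (b : B) (c : C), 0 ≤ ∑ a : A, P a b c :=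
    fun b c => Finset.sum_nonneg fun a _ => hP a b c
  have hK0 : ∀ c : C, 0 ≤ ∑ a : A, ∑ b : B, P a b c :=
    fun c => Finset.sum_nonneg fun a _ => hAf0 a c
  have hPA : ∀ a b c, P a b c ≤ ∑ b' : B, P a b' c :=
    fun a b c => Finset.single_le_sum (fun b' _ => hP a b' c) (Finset.mem_univ b)
  have hPB : ∀ a b c, P a b c ≤ ∑ a' : A, P a' b c :=
    fun a b c => Finset.single_le_sum (fun a' _ => hP a' b c) (Finset.mem_univ a)
  have hPK : ∀ a b c, P a b c ≤ ∑ a' : A, ∑ b' : B, P a' b' c :=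
    fun a b c => le_trans (hPA a b c)
      (Finset.single_le_sum (fun a' _ => hAf0 a' c) (Finset.mem_univ a))
  rw [expandA, expandB, expandK]
  -- termwise bound
  have step1 : ∀ x : A × B × C,
      P x.1 x.2.1 x.2.2 - (∑ b : B, P x.1 b x.2.2) * (∑ a : A, P a x.2.1 x.2.2)
          / (∑ a : A, ∑ b : B, P a b x.2.2)
      ≤ (-(P x.1 x.2.1 x.2.2) * Real.log (∑ b : B, P x.1 b x.2.2)
          + -(P x.1 x.2.1 x.2.2) * Real.log (∑ a : A, P a x.2.1 x.2.2))
        - (Real.negMulLog (P x.1 x.2.1 x.2.2)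
          + -(P x.1 x.2.1 x.2.2) * Real.log (∑ a : A, ∑ b : B, P a b x.2.2)) := by
    rintro ⟨a, b, c⟩
    have h := log_term_ge (hP a b c) (hPA a b c) (hPB a b c) (hPK a b c)
      (hAf0 a c) (hBf0 b c) (hK0 c)
    simp only [Real.negMulLog]
    linarith [h]
  -- sum of the correction terms is ≤ sum of P i.e. ≥ 0 overall
  have hq : ∑ x : A × B × C, (∑ b : B, P x.1 b x.2.2) * (∑ a : A, P a x.2.1 x.2.2)
      / (∑ a : A, ∑ b : B, P a b x.2.2) ≤ 1 := by
    rw [sum_reorder_abc (fun a b c => (∑ b' : B, P a b' c) * (∑ a' : A, P a' b c)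
      / (∑ a' : A, ∑ b' : B, P a' b' c))]
    rw [sum_rot2 (fun a b c => (∑ b' : B, P a b' c) * (∑ a' : A, P a' b c)
      / (∑ a' : A, ∑ b' : B, P a' b' c))]
    have hc : ∀ c : C, ∑ a : A, ∑ b : B, ((∑ b' : B, P a b' c) * (∑ a' : A, P a' b c)
        / (∑ a' : A, ∑ b' : B, P a' b' c)) ≤ ∑ a : A, ∑ b : B, P a b c := by
      intro c
      have hinner : ∀ a : A, ∑ b : B, ((∑ b' : B, P a b' c) * (∑ a' : A, P a' b c)
          / (∑ a' : A, ∑ b' : B, P a' b' c))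
          = (∑ b' : B, P a b' c) * (∑ b : B, ∑ a' : A, P a' b c)
            / (∑ a' : A, ∑ b' : B, P a' b' c) := by
        intro a
        rw [Finset.mul_sum, Finset.sum_div]
      have hswap : (∑ b : B, ∑ a' : A, P a' b c) = ∑ a' : A, ∑ b : B, P a' b c :=
        Finset.sum_comm
      calc ∑ a : A, ∑ b : B, ((∑ b' : B, P a b' c) * (∑ a' : A, P a' b c)
            / (∑ a' : A, ∑ b' : B, P a' b' c))
          = ∑ a : A, ((∑ b' : B, P a b' c) * (∑ a' : A, ∑ b' : B, P a' b' c)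
            / (∑ a' : A, ∑ b' : B, P a' b' c)) := by
            refine Finset.sum_congr rfl fun a _ => ?_
            rw [hinner a, hswap]
        _ = (∑ a : A, ∑ b' : B, P a b' c) * (∑ a' : A, ∑ b' : B, P a' b' c)
            / (∑ a' : A, ∑ b' : B, P a' b' c) := by
            rw [← Finset.sum_div, ← Finset.sum_mul]
        _ ≤ ∑ a : A, ∑ b : B, P a b c := Ksq_div_le _ (hK0 c)
    calc ∑ c : C, ∑ a : A, ∑ b : B, ((∑ b' : B, P a b' c) * (∑ a' : A, P a' b c)
          / (∑ a' : A, ∑ b' : B, P a' b' c))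
        ≤ ∑ c : C, ∑ a : A, ∑ b : B, P a b c := Finset.sum_le_sum fun c _ => hc c
      _ = 1 := by rw [← sum_rot2 P, ← sum_reorder_abc P, hsum]
  have main := Finset.sum_le_sum (s := (Finset.univ : Finset (A × B × C))) (fun x _ => step1 x)
  rw [Finset.sum_sub_distrib] at main
  rw [hsum] at main
  rw [Finset.sum_sub_distrib, Finset.sum_add_distrib, Finset.sum_add_distrib] at main
  linarith
  
lemma ci_core (P : A → B → C → ℝ) (hP : ∀ a b c, 0 ≤ P a b c)
    (hfact : ∀ a b c, P a b c * (∑ a' : A, ∑ b' : B, P a' b' c)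
      = (∑ b' : B, P a b' c) * (∑ a' : A, P a' b c)) :
    ∑ x : A × B × C, Real.negMulLog (P x.1 x.2.1 x.2.2)
      + ∑ c : C, Real.negMulLog (∑ a : A, ∑ b : B, P a b c)
    = ∑ y : A × C, Real.negMulLog (∑ b : B, P y.1 b y.2)
      + ∑ y : B × C, Real.negMulLog (∑ a : A, P a y.1 y.2) := by
  classical
  have hAf0 : ∀ (a : A) (c : C), 0 ≤ ∑ b : B, P a b c :=
    fun a c => Finset.sum_nonneg fun b _ => hP a b c
  have hPA : ∀ a b c, P a b c ≤ ∑ b' : B, P a b' c :=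
    fun a b c => Finset.single_le_sum (fun b' _ => hP a b' c) (Finset.mem_univ b)
  have hPK : ∀ a b c, P a b c ≤ ∑ a' : A, ∑ b' : B, P a' b' c :=
    fun a b c => le_trans (hPA a b c)
      (Finset.single_le_sum (fun a' _ => hAf0 a' c) (Finset.mem_univ a))
  rw [expandA, expandB, expandK]
  rw [← Finset.sum_add_distrib, ← Finset.sum_add_distrib]
  refine Finset.sum_congr rfl ?_
  rintro ⟨a, b, c⟩ -
  rcases eq_or_lt_of_le (hP a b c) with h0 | h0
  · rw [← h0]; simp [Real.negMulLog]
  · have hK0' : 0 < ∑ a' : A, ∑ b' : B, P a' b' c := lt_of_lt_of_le h0 (hPK a b c)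
    have hprod : 0 < (∑ b' : B, P a b' c) * (∑ a' : A, P a' b c) := by
      rw [← hfact a b c]
      exact mul_pos h0 hK0'
    have hA0' : 0 < ∑ b' : B, P a b' c :=
      lt_of_le_of_ne (hAf0 a c) (by intro h; rw [← h] at hprod; simp at hprod)
    have hB0' : 0 < ∑ a' : A, P a' b c := by
      rcases eq_or_lt_of_le (Finset.sum_nonneg fun a' _ => hP a' b c) with h | h
      · rw [← h] at hprod; simp at hprod
      · exact h
    have hlogeq : Real.log (P a b c) + Real.log (∑ a' : A, ∑ b' : B, P a' b' c)
        = Real.log (∑ b' : B, P a b' c) + Real.log (∑ a' : A, P a' b c) := by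
      rw [← Real.log_mul h0.ne' hK0'.ne', ← Real.log_mul hA0'.ne' hB0'.ne', hfact a b c]
    simp only [Real.negMulLog]
    linear_combination (-(P a b c)) * hlogeq

end Core

section Bridge

variable {Ω : Type*} [MeasurableSpace Ω] {μ : Measure Ω} [IsProbabilityMeasure μ]
variable {A B C : Type*} [Fintype A] [Fintype B] [Fintype C]
  [MeasurableSpace A] [MeasurableSingletonClass A]
  [MeasurableSpace B] [MeasurableSingletonClass B]
  [MeasurableSpace C] [MeasurableSingletonClass C]
variable {f : Ω → A} {g : Ω → B} {k : Ω → C}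

lemma probOf_marg_fk (hf : Measurable f) (hg : Measurable g) (hk : Measurable k)
    (a : A) (c : C) :
    probOf μ (fun ω => (f ω, k ω)) (a, c)
      = ∑ b : B, probOf μ (fun ω => (f ω, g ω, k ω)) (a, b, c) := by
  classical
  calc probOf μ (fun ω => (f ω, k ω)) (a, c)
      = ∑ x : A × B × C, if (x.1, x.2.2) = (a, c)
          then probOf μ (fun ω => (f ω, g ω, k ω)) x else 0 :=
        probOf_comp (hf.prodMk (hg.prodMk hk)) (fun x : A × B × C => (x.1, x.2.2)) (a, c)
    _ = ∑ b : B, probOf μ (fun ω => (f ω, g ω, k ω)) (a, b, c) := by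
        simp [Fintype.sum_prod_type, Prod.ext_iff, ite_and]

lemma probOf_marg_gk (hf : Measurable f) (hg : Measurable g) (hk : Measurable k)
    (b : B) (c : C) :
    probOf μ (fun ω => (g ω, k ω)) (b, c)
      = ∑ a : A, probOf μ (fun ω => (f ω, g ω, k ω)) (a, b, c) := by
  classical
  calc probOf μ (fun ω => (g ω, k ω)) (b, c)
      = ∑ x : A × B × C, if x.2 = (b, c)
          then probOf μ (fun ω => (f ω, g ω, k ω)) x else 0 :=
        probOf_comp (hf.prodMk (hg.prodMk hk)) (fun x : A × B × C => x.2) (b, c)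
    _ = ∑ a : A, probOf μ (fun ω => (f ω, g ω, k ω)) (a, b, c) := by
        simp [Fintype.sum_prod_type, Prod.ext_iff, ite_and]

lemma probOf_marg_k (hf : Measurable f) (hg : Measurable g) (hk : Measurable k) (c : C) :
    probOf μ k c
      = ∑ a : A, ∑ b : B, probOf μ (fun ω => (f ω, g ω, k ω)) (a, b, c) := by
  classical
  calc probOf μ k c
      = ∑ x : A × B × C, if x.2.2 = c
          then probOf μ (fun ω => (f ω, g ω, k ω)) x else 0 :=
        probOf_comp (hf.prodMk (hg.prodMk hk)) (fun x : A × B × C => x.2.2) c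
    _ = ∑ a : A, ∑ b : B, probOf μ (fun ω => (f ω, g ω, k ω)) (a, b, c) := by
        simp [Fintype.sum_prod_type, Prod.ext_iff, ite_and]

lemma entropy_triple_add_le (hf : Measurable f) (hg : Measurable g) (hk : Measurable k) :
    entropyOf μ (fun ω => (f ω, g ω, k ω)) + entropyOf μ k
      ≤ entropyOf μ (fun ω => (f ω, k ω)) + entropyOf μ (fun ω => (g ω, k ω)) := by
  classical
  have hsum : ∑ x : A × B × C, probOf μ (fun ω => (f ω, g ω, k ω)) (x.1, x.2.1, x.2.2) = 1 :=
    sum_probOf (hf.prodMk (hg.prodMk hk))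
  have e0 : entropyOf μ (fun ω => (f ω, g ω, k ω))
      = ∑ x : A × B × C, Real.negMulLog (probOf μ (fun ω => (f ω, g ω, k ω)) (x.1, x.2.1, x.2.2)) :=
    rfl
  have ek : entropyOf μ k = ∑ c : C, Real.negMulLog
      (∑ a : A, ∑ b : B, probOf μ (fun ω => (f ω, g ω, k ω)) (a, b, c)) :=
    Finset.sum_congr rfl fun c _ => by rw [probOf_marg_k hf hg hk c]
  have efk : entropyOf μ (fun ω => (f ω, k ω)) = ∑ y : A × C, Real.negMulLog
      (∑ b : B, probOf μ (fun ω => (f ω, g ω, k ω)) (y.1, b, y.2)) :=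
    Finset.sum_congr rfl fun y _ => by rw [← probOf_marg_fk hf hg hk y.1 y.2]
  have egk : entropyOf μ (fun ω => (g ω, k ω)) = ∑ y : B × C, Real.negMulLog
      (∑ a : A, probOf μ (fun ω => (f ω, g ω, k ω)) (a, y.1, y.2)) :=
    Finset.sum_congr rfl fun y _ => by rw [← probOf_marg_gk hf hg hk y.1 y.2]
  rw [e0, ek, efk, egk]
  exact kl_core (fun a b c => probOf μ (fun ω => (f ω, g ω, k ω)) (a, b, c))
    (fun a b c => probOf_nonneg' _ _) hsum

lemma entropy_triple_ci_eq (hf : Measurable f) (hg : Measurable g) (hk : Measurable k)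
    (hci : ∀ (a : A) (b : B) (c : C),
      probOf μ (fun ω => (f ω, g ω, k ω)) (a, b, c) * probOf μ k c
        = probOf μ (fun ω => (f ω, k ω)) (a, c) * probOf μ (fun ω => (g ω, k ω)) (b, c)) :
    entropyOf μ (fun ω => (f ω, g ω, k ω)) + entropyOf μ k
      = entropyOf μ (fun ω => (f ω, k ω)) + entropyOf μ (fun ω => (g ω, k ω)) := by
  classical
  have e0 : entropyOf μ (fun ω => (f ω, g ω, k ω))
      = ∑ x : A × B × C, Real.negMulLog (probOf μ (fun ω => (f ω, g ω, k ω)) (x.1, x.2.1, x.2.2)) :=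
    rfl
  have ek : entropyOf μ k = ∑ c : C, Real.negMulLog
      (∑ a : A, ∑ b : B, probOf μ (fun ω => (f ω, g ω, k ω)) (a, b, c)) :=
    Finset.sum_congr rfl fun c _ => by rw [probOf_marg_k hf hg hk c]
  have efk : entropyOf μ (fun ω => (f ω, k ω)) = ∑ y : A × C, Real.negMulLog
      (∑ b : B, probOf μ (fun ω => (f ω, g ω, k ω)) (y.1, b, y.2)) :=
    Finset.sum_congr rfl fun y _ => by rw [← probOf_marg_fk hf hg hk y.1 y.2]
  have egk : entropyOf μ (fun ω => (g ω, k ω)) = ∑ y : B × C, Real.negMulLog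
      (∑ a : A, probOf μ (fun ω => (f ω, g ω, k ω)) (a, y.1, y.2)) :=
    Finset.sum_congr rfl fun y _ => by rw [← probOf_marg_gk hf hg hk y.1 y.2]
  rw [e0, ek, efk, egk]
  refine ci_core (fun a b c => probOf μ (fun ω => (f ω, g ω, k ω)) (a, b, c))
    (fun a b c => probOf_nonneg' _ _) ?_
  intro a b c
  rw [← probOf_marg_k hf hg hk c, ← probOf_marg_fk hf hg hk a c, ← probOf_marg_gk hf hg hk b c]
  exact hci a b c

end Bridge

section CIProb

variable {Ω : Type*} [MeasurableSpace Ω] {μ : Measure Ω} [IsProbabilityMeasure μ]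
variable {A B C : Type*}

lemma condIndepRV_probOf {f : Ω → A} {g : Ω → B} {k : Ω → C}
    (h : CondIndepRV μ f g k) (a : A) (b : B) (c : C) :
    probOf μ (fun ω => (f ω, g ω, k ω)) (a, b, c) * probOf μ k c
      = probOf μ (fun ω => (f ω, k ω)) (a, c) * probOf μ (fun ω => (g ω, k ω)) (b, c) := by
  have h' := h a b c
  unfold probOf
  rw [← ENNReal.toReal_mul, ← ENNReal.toReal_mul]
  congr 1
  have s1 : {ω | (f ω, g ω, k ω) = (a, b, c)} = {ω | f ω = a ∧ g ω = b ∧ k ω = c} := by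
    ext ω; simp [Prod.ext_iff]
  have s2 : {ω | (f ω, k ω) = (a, c)} = {ω | f ω = a ∧ k ω = c} := by
    ext ω; simp [Prod.ext_iff]
  have s3 : {ω | (g ω, k ω) = (b, c)} = {ω | g ω = b ∧ k ω = c} := by
    ext ω; simp [Prod.ext_iff]
  rw [s1, s2, s3]
  exact h'

end CIProb

/-- Statement: the third conditional Ingleton inequality. -/
theorem conditional_ingleton_3cI
    {Ω : Type*} [MeasurableSpace Ω] (μ : Measure Ω) [IsProbabilityMeasure μ]
    {SX SY SZ SU : Type*}
    [Fintype SX] [Nonempty SX] [MeasurableSpace SX] [MeasurableSingletonClass SX]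
    [Fintype SY] [Nonempty SY] [MeasurableSpace SY] [MeasurableSingletonClass SY]
    [Fintype SZ] [Nonempty SZ] [MeasurableSpace SZ] [MeasurableSingletonClass SZ]
    [Fintype SU] [Nonempty SU] [MeasurableSpace SU] [MeasurableSingletonClass SU]
    (ξX : Ω → SX) (ξY : Ω → SY) (ξZ : Ω → SZ) (ξU : Ω → SU)
    (mX : Measurable ξX) (mY : Measurable ξY) (mZ : Measurable ξZ) (mU : Measurable ξU)
    (h1 : CondIndepRV μ ξX ξZ ξU) (h2 : CondIndepRV μ ξX ξU ξZ) :
    0 ≤ ingletonEnt μ ξX ξY ξZ ξU := by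
  classical
  -- probability mass abbreviations
  set pZ : SZ → ℝ := fun z => probOf μ ξZ z with hpZ
  set pU : SU → ℝ := fun u => probOf μ ξU u with hpU
  set pXZ : SX → SZ → ℝ := fun x z => probOf μ (fun ω => (ξX ω, ξZ ω)) (x, z) with hpXZ
  set pXU : SX → SU → ℝ := fun x u => probOf μ (fun ω => (ξX ω, ξU ω)) (x, u) with hpXU
  set pZU : SZ → SU → ℝ := fun z u => probOf μ (fun ω => (ξZ ω, ξU ω)) (z, u) with hpZU
  set pXZU : SX → SZ → SU → ℝ :=
    fun x z u => probOf μ (fun ω => (ξX ω, ξZ ω, ξU ω)) (x, z, u) with hpXZU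
  -- the common-information variable W = r ∘ ξZ
  set R : SZ → SZ → Prop := fun z z' => ∃ u, 0 < pZU z u ∧ 0 < pZU z' u with hR
  letI s : Setoid SZ := Relation.EqvGen.setoid R
  set r : SZ → SZ := fun z => (Quotient.mk s z).out with hrdef
  have hr_eq : ∀ z z', Relation.EqvGen R z z' → r z = r z' :=
    fun z z' h => congrArg Quotient.out (Quotient.sound h)
  have hr_rev : ∀ z z', r z = r z' → Relation.EqvGen R z z' := by
    intro z z' h
    have h2' := congrArg (Quotient.mk s) h
    rw [hrdef] at h2'
    simp only at h2'
    rw [Quotient.out_eq, Quotient.out_eq] at h2'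
    exact Quotient.exact h2'
  have mW : Measurable (fun ω => r (ξZ ω)) := (measurable_of_countable r).comp mZ
  -- basic positivity transfers
  have hZU_le_Z : ∀ z u, pZU z u ≤ pZ z := fun z u =>
    probOf_mono' (fun ω h => by simp only [Prod.mk.injEq] at h; exact h.1)
  have hZU_le_U : ∀ z u, pZU z u ≤ pU u := fun z u =>
    probOf_mono' (fun ω h => by simp only [Prod.mk.injEq] at h; exact h.2)
  -- real versions of the conditional independence hypotheses
  have rh1 : ∀ x z u, pXZU x z u * pU u = pXU x u * pZU z u := fun x z u =>
    condIndepRV_probOf h1 x z u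
  have hrh2 : ∀ x z u, pXZU x z u * pZ z = pXZ x z * pZU z u := by
    intro x z u
    have cv1 : probOf μ (fun ω => (ξX ω, ξU ω, ξZ ω)) (x, u, z) = pXZU x z u :=
      probOf_eq_of_iff (fun ω => by simp [Prod.ext_iff]; tauto)
    have cv2 : probOf μ (fun ω => (ξU ω, ξZ ω)) (u, z) = pZU z u :=
      probOf_eq_of_iff (fun ω => by simp [Prod.ext_iff]; tauto)
    have := condIndepRV_probOf h2 x u z
    rw [cv1, cv2] at this
    exact this
  -- P(x|z) = P(x|u) on the support
  have key_gen : ∀ x z u, 0 < pZU z u → pXZ x z * pU u = pXU x u * pZ z := by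
    intro x z u hpos
    apply mul_right_cancel₀ (ne_of_gt hpos)
    linear_combination (pZ z) * rh1 x z u - (pU u) * hrh2 x z u
  -- P(x|z) is constant on R-equivalence classes
  have C1 : ∀ z z', Relation.EqvGen R z z' →
      z = z' ∨ (0 < pZ z ∧ 0 < pZ z' ∧ ∀ x, pXZ x z * pZ z' = pXZ x z' * pZ z) := by
    intro z z' h
    induction h with
    | rel p q hpq =>
        obtain ⟨u, hp, hq⟩ := hpq
        have hzp : 0 < pZ p := lt_of_lt_of_le hp (hZU_le_Z p u)
        have hzq : 0 < pZ q := lt_of_lt_of_le hq (hZU_le_Z q u)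
        have hu : 0 < pU u := lt_of_lt_of_le hp (hZU_le_U p u)
        refine Or.inr ⟨hzp, hzq, fun x => ?_⟩
        apply mul_right_cancel₀ hu.ne'
        linear_combination (pZ q) * key_gen x p u hp - (pZ p) * key_gen x q u hq
    | refl p => exact Or.inl rfl
    | symm p q _ ih =>
        rcases ih with h | ⟨ha, hb, he⟩
        · exact Or.inl h.symm
        · exact Or.inr ⟨hb, ha, fun x => (he x).symm⟩
    | trans p q w _ _ ih1 ih2 =>
        rcases ih1 with h | ⟨hp, hq, e1⟩
        · subst h; exact ih2
        · rcases ih2 with h' | ⟨hq', hw, e2⟩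
          · subst h'; exact Or.inr ⟨hp, hq, e1⟩
          · refine Or.inr ⟨hp, hw, fun x => ?_⟩
            apply mul_left_cancel₀ hq.ne'
            linear_combination (pZ w) * e1 x + (pZ p) * e2 x
  -- expansions of the W-marginals
  have pW_eq : ∀ w, probOf μ (fun ω => r (ξZ ω)) w
      = ∑ z' : SZ, if r z' = w then pZ z' else 0 := fun w => probOf_comp mZ r w
  have pXW_eq : ∀ x w, probOf μ (fun ω => (ξX ω, r (ξZ ω))) (x, w)
      = ∑ z' : SZ, if r z' = w then pXZ x z' else 0 := by
    intro x w
    calc probOf μ (fun ω => (ξX ω, r (ξZ ω))) (x, w)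
        = ∑ y : SX × SZ, if (y.1, r y.2) = (x, w)
            then probOf μ (fun ω => (ξX ω, ξZ ω)) y else 0 :=
          probOf_comp (mX.prodMk mZ) (fun y : SX × SZ => (y.1, r y.2)) (x, w)
      _ = ∑ z' : SZ, if r z' = w then pXZ x z' else 0 := by
          simp [Fintype.sum_prod_type, Prod.ext_iff, ite_and]
          rfl
  -- the conditional independence X ⊥ (Z,U) | W at the level of probabilities
  have C2 : ∀ (a : SX) (b : SZ × SU) (c : SZ),
      probOf μ (fun ω => (ξX ω, (ξZ ω, ξU ω), r (ξZ ω))) (a, b, c)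
          * probOf μ (fun ω => r (ξZ ω)) c
        = probOf μ (fun ω => (ξX ω, r (ξZ ω))) (a, c)
          * probOf μ (fun ω => ((ξZ ω, ξU ω), r (ξZ ω))) (b, c) := by
    rintro a ⟨z, u⟩ c
    by_cases hc : r z = c
    · subst hc
      have hA : probOf μ (fun ω => (ξX ω, (ξZ ω, ξU ω), r (ξZ ω))) (a, (z, u), r z)
          = pXZU a z u := by
        refine probOf_eq_of_iff (fun ω => ?_)
        simp only [Prod.mk.injEq]
        constructor
        · rintro ⟨hX, ⟨hZ, hU⟩, -⟩; exact ⟨hX, hZ, hU⟩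
        · rintro ⟨hX, hZ, hU⟩; exact ⟨hX, ⟨hZ, hU⟩, by rw [hZ]⟩
      have hB : probOf μ (fun ω => ((ξZ ω, ξU ω), r (ξZ ω))) ((z, u), r z)
          = pZU z u := by
        refine probOf_eq_of_iff (fun ω => ?_)
        simp only [Prod.mk.injEq]
        constructor
        · rintro ⟨⟨hZ, hU⟩, -⟩; exact ⟨hZ, hU⟩
        · rintro ⟨hZ, hU⟩; exact ⟨⟨hZ, hU⟩, by rw [hZ]⟩
      rw [hA, hB]
      rcases eq_or_lt_of_le (probOf_nonneg' (fun ω => (ξZ ω, ξU ω)) (z, u) : (0:ℝ) ≤ pZU z u)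
        with h0 | h0
      · have hP0 : pXZU a z u = 0 := by
          refine le_antisymm ?_ (probOf_nonneg' _ _)
          rw [h0]
          exact probOf_mono' (fun ω h => by
            simp only [Prod.mk.injEq] at h ⊢; exact ⟨h.2.1, h.2.2⟩)
        have h0' : pZU z u = 0 := h0.symm
        rw [hP0, h0']
        ring
      · have hz : 0 < pZ z := lt_of_lt_of_le h0 (hZU_le_Z z u)
        have key : pXZ a z * probOf μ (fun ω => r (ξZ ω)) (r z)
            = probOf μ (fun ω => (ξX ω, r (ξZ ω))) (a, r z) * pZ z := by
          rw [pW_eq (r z), pXW_eq a (r z), Finset.mul_sum, Finset.sum_mul]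
          refine Finset.sum_congr rfl fun z' _ => ?_
          by_cases h' : r z' = r z
          · simp only [h', if_true]
            rcases C1 z z' (hr_rev z z' h'.symm) with he | ⟨-, -, he⟩
            · subst he; rfl
            · exact he a
          · simp [h']
        apply mul_left_cancel₀ hz.ne'
        linear_combination (probOf μ (fun ω => r (ξZ ω)) (r z)) * hrh2 a z u
          + (pZU z u) * key
    · have hA0 : probOf μ (fun ω => (ξX ω, (ξZ ω, ξU ω), r (ξZ ω))) (a, (z, u), c) = 0 := by
        refine probOf_empty' (fun ω h => ?_)
        simp only [Prod.mk.injEq] at h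
        exact hc (h.2.1.1 ▸ h.2.2)
      have hB0 : probOf μ (fun ω => ((ξZ ω, ξU ω), r (ξZ ω))) ((z, u), c) = 0 := by
        refine probOf_empty' (fun ω h => ?_)
        simp only [Prod.mk.injEq] at h
        exact hc (h.1.1 ▸ h.2)
      rw [hA0, hB0]
      ring
  -- W is a.e. a function of U as well
  set gu : SU → SZ := fun u => if h : ∃ z, 0 < pZU z u then r h.choose else r (Classical.arbitrary SZ)
    with hgu_def
  have hgu : ∀ z u, 0 < pZU z u → gu u = r z := by
    intro z u hzu
    have hex : ∃ z', 0 < pZU z' u := ⟨z, hzu⟩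
    rw [hgu_def]
    simp only [dif_pos hex]
    exact hr_eq _ _ (Relation.EqvGen.rel _ _ ⟨u, hex.choose_spec, hzu⟩)
  have haeZU : μ {ω | r (ξZ ω) ≠ gu (ξU ω)} = 0 := by
    have subset : {ω | r (ξZ ω) ≠ gu (ξU ω)} ⊆ (fun ω => (ξZ ω, ξU ω)) ⁻¹'
        (↑((Finset.univ : Finset (SZ × SU)).filter fun p => pZU p.1 p.2 = 0)) := by
      intro ω hω
      simp only [Set.mem_preimage, Finset.coe_filter, Finset.mem_univ, true_and,
        Set.mem_setOf_eq]
      by_contra hne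
      have hpos : 0 < pZU (ξZ ω) (ξU ω) :=
        lt_of_le_of_ne (probOf_nonneg' _ _) (Ne.symm hne)
      exact hω (hgu (ξZ ω) (ξU ω) hpos).symm
    refine measure_mono_null subset ?_
    have hsum := sum_measure_preimage_singleton (μ := μ)
      (((Finset.univ : Finset (SZ × SU))).filter fun p => pZU p.1 p.2 = 0)
      (fun y _ => (mZ.prodMk mU) (measurableSet_singleton y))
    rw [← hsum]
    apply Finset.sum_eq_zero
    intro p hp
    simp only [Finset.mem_filter, Finset.mem_univ, true_and] at hp
    have h0 : (μ {ω | (ξZ ω, ξU ω) = p}).toReal = 0 := hp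
    rcases (ENNReal.toReal_eq_zero_iff _).mp h0 with h | h
    · exact h
    · exact absurd h (measure_ne_top μ _)
  -- now the entropy bookkeeping
  have F1 : entropyOf μ (fun ω => (ξX ω, ξU ω, ξZ ω)) + entropyOf μ ξZ
      ≤ entropyOf μ (fun ω => (ξX ω, ξZ ω)) + entropyOf μ (fun ω => (ξU ω, ξZ ω)) :=
    entropy_triple_add_le mX mU mZ
  have F2 : entropyOf μ (fun ω => (ξX ω, ξZ ω, ξU ω)) + entropyOf μ ξU
      ≤ entropyOf μ (fun ω => (ξX ω, ξU ω)) + entropyOf μ (fun ω => (ξZ ω, ξU ω)) :=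
    entropy_triple_add_le mX mZ mU
  have F3 : entropyOf μ (fun ω => (ξX ω, ξY ω, r (ξZ ω))) + entropyOf μ (fun ω => r (ξZ ω))
      ≤ entropyOf μ (fun ω => (ξX ω, r (ξZ ω)))
        + entropyOf μ (fun ω => (ξY ω, r (ξZ ω))) :=
    entropy_triple_add_le mX mY mW
  have F4 : entropyOf μ (fun ω => (ξX ω, ξY ω))
      ≤ entropyOf μ (fun ω => (ξX ω, ξY ω, r (ξZ ω))) :=
    entropyOf_comp_le (mX.prodMk (mY.prodMk mW))
      (fun p : SX × SY × SZ => (p.1, p.2.1))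
  have F5 : entropyOf μ (fun ω => (ξZ ω, ξU ω, (ξY ω, r (ξZ ω))))
        + entropyOf μ (fun ω => (ξY ω, r (ξZ ω)))
      ≤ entropyOf μ (fun ω => (ξZ ω, (ξY ω, r (ξZ ω))))
        + entropyOf μ (fun ω => (ξU ω, (ξY ω, r (ξZ ω)))) :=
    entropy_triple_add_le mZ mU (mY.prodMk mW)
  have F6 : entropyOf μ (fun ω => (ξX ω, (ξZ ω, ξU ω), r (ξZ ω)))
        + entropyOf μ (fun ω => r (ξZ ω))
      = entropyOf μ (fun ω => (ξX ω, r (ξZ ω)))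
        + entropyOf μ (fun ω => ((ξZ ω, ξU ω), r (ξZ ω))) :=
    entropy_triple_ci_eq mX (mZ.prodMk mU) mW C2
  -- conversions by injective relabelings
  have cv1a : entropyOf μ (fun ω => (ξX ω, ξU ω, ξZ ω))
      = entropyOf μ (fun ω => (ξX ω, ξZ ω, ξU ω)) :=
    entropyOf_comp_inj (e := fun p : SX × SZ × SU => (p.1, p.2.2, p.2.1))
      (by intro p q h; simp [Prod.ext_iff] at h ⊢; tauto) (fun ω => (ξX ω, ξZ ω, ξU ω))
  have cv1b : entropyOf μ (fun ω => (ξU ω, ξZ ω))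
      = entropyOf μ (fun ω => (ξZ ω, ξU ω)) :=
    entropyOf_comp_inj (e := fun p : SZ × SU => (p.2, p.1))
      (by intro p q h; simp [Prod.ext_iff] at h ⊢; tauto) (fun ω => (ξZ ω, ξU ω))
  have cv5a : entropyOf μ (fun ω => (ξZ ω, ξU ω, (ξY ω, r (ξZ ω))))
      = entropyOf μ (fun ω => (ξY ω, ξZ ω, ξU ω)) :=
    entropyOf_comp_inj (e := fun p : SY × SZ × SU => (p.2.1, p.2.2, (p.1, r p.2.1)))
      (by intro p q h; simp [Prod.ext_iff] at h ⊢; tauto) (fun ω => (ξY ω, ξZ ω, ξU ω))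
  have cv5b : entropyOf μ (fun ω => (ξZ ω, (ξY ω, r (ξZ ω))))
      = entropyOf μ (fun ω => (ξY ω, ξZ ω)) :=
    entropyOf_comp_inj (e := fun p : SY × SZ => (p.2, (p.1, r p.2)))
      (by intro p q h; simp [Prod.ext_iff] at h ⊢; tauto) (fun ω => (ξY ω, ξZ ω))
  have cv5c1 : entropyOf μ (fun ω => (ξU ω, (ξY ω, r (ξZ ω))))
      = entropyOf μ (fun ω => (ξU ω, (ξY ω, gu (ξU ω)))) := by
    refine entropyOf_congr_ae (measure_mono_null ?_ haeZU)
    intro ω hω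
    simp only [Set.mem_setOf_eq] at hω ⊢
    intro h'
    exact hω (by rw [h'])
  have cv5c2 : entropyOf μ (fun ω => (ξU ω, (ξY ω, gu (ξU ω))))
      = entropyOf μ (fun ω => (ξY ω, ξU ω)) :=
    entropyOf_comp_inj (e := fun p : SY × SU => (p.2, (p.1, gu p.2)))
      (by intro p q h; simp [Prod.ext_iff] at h ⊢; tauto) (fun ω => (ξY ω, ξU ω))
  have cv6a : entropyOf μ (fun ω => (ξX ω, (ξZ ω, ξU ω), r (ξZ ω)))
      = entropyOf μ (fun ω => (ξX ω, ξZ ω, ξU ω)) :=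
    entropyOf_comp_inj (e := fun p : SX × SZ × SU => (p.1, (p.2.1, p.2.2), r p.2.1))
      (by intro p q h; simp [Prod.ext_iff] at h ⊢; tauto) (fun ω => (ξX ω, ξZ ω, ξU ω))
  have cv6b : entropyOf μ (fun ω => ((ξZ ω, ξU ω), r (ξZ ω)))
      = entropyOf μ (fun ω => (ξZ ω, ξU ω)) :=
    entropyOf_comp_inj (e := fun p : SZ × SU => (p, r p.1))
      (by intro p q h; simp [Prod.ext_iff] at h ⊢; tauto) (fun ω => (ξZ ω, ξU ω))
  unfold ingletonEnt
  linarith [F1, F2, F3, F4, F5, F6, cv1a, cv1b, cv5a, cv5b, cv5c1, cv5c2, cv6a, cv6b]
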